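/- For any signed permutation π of [n], fwex(π) + fexc(π^tr) = 2n, where π^tr is the signed permutation whose signed permutation matrix is the transpose of that of π. -/

import Mathlib

open Finset

/-- A signed permutation of `[n]`, encoded as an (unsigned) permutation of `Fin n`
together with a sign (`true` = negative) for each position. -/
abbrev BPerm (n : ℕ) := Equiv.Perm (Fin n) × (Fin n → Bool)

namespace BPerm

variable {n : ℕ}

/-- The value `π_k` (1-indexed, a signed integer), with `π_0 = 0` and `π_k = 0` for `k > n`. -/
def vseq (π : BPerm n) (k : ℕ) : ℤ :=
  if h : 0 < k ∧ k ≤ n then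
    (if π.2 ⟨k - 1, by omega⟩ then -1 else 1) * ((π.1 ⟨k - 1, by omega⟩ : ℕ) + 1 : ℤ)
  else 0

/-- Number of negative entries. -/
def neg (π : BPerm n) : ℕ := ((Finset.Icc 1 n).filter fun i => vseq π i < 0).card

/-- Number of weak excedances: `π_i ≥ i`. -/
def wex (π : BPerm n) : ℕ := ((Finset.Icc 1 n).filter fun i : ℕ => (i : ℤ) ≤ vseq π i).card

/-- Number of excedances: `π_i > i`. -/
def exc (π : BPerm n) : ℕ := ((Finset.Icc 1 n).filter fun i : ℕ => (i : ℤ) < vseq π i).card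

/-- Flag weak excedances: `2 wex + neg`. -/
def fwex (π : BPerm n) : ℕ := 2 * wex π + neg π

/-- Flag excedances: `2 exc + neg`. -/
def fexc (π : BPerm n) : ℕ := 2 * exc π + neg π

/-- Number of descents `π_i > π_{i+1}` for `i ∈ [n-1]`. -/
def des (π : BPerm n) : ℕ := ((Finset.Ico 1 n).filter fun i => vseq π (i + 1) < vseq π i).card

/-- Type `B` descents: also counts `i = 0`, with the convention `π_0 = 0`. -/
def desB (π : BPerm n) : ℕ := ((Finset.Ico 0 n).filter fun i => vseq π (i + 1) < vseq π i).card

/-- Flag descents. -/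
def fdes (π : BPerm n) : ℕ := des π + desB π

/-- Number of crossings: pairs `(i,j)` with `i,j > 0` such that `i < j ≤ π_i < π_j`, or
`-i < j ≤ -π_i < π_j`, or `i > j > π_i > π_j`. -/
def cro (π : BPerm n) : ℕ :=
  (((Finset.Icc 1 n) ×ˢ (Finset.Icc 1 n)).filter fun p : ℕ × ℕ =>
    ((p.1 < p.2 ∧ (p.2 : ℤ) ≤ vseq π p.1 ∧ vseq π p.1 < vseq π p.2) ∨
     (-(p.1 : ℤ) < (p.2 : ℤ) ∧ (p.2 : ℤ) ≤ -(vseq π p.1) ∧ -(vseq π p.1) < vseq π p.2) ∨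
     (p.2 < p.1 ∧ vseq π p.1 < (p.2 : ℤ) ∧ vseq π p.2 < vseq π p.1))).card

end BPerm

namespace BPerm

/-- The transpose `π^tr` of a signed permutation: `π^tr_i = ε·j` iff `π_j = ε·i`. -/
def transB (π : BPerm n) : BPerm n := (π.1⁻¹, fun i => π.2 (π.1⁻¹ i))

lemma vseq_succ (π : BPerm n) (i : Fin n) :
    vseq π ((i : ℕ) + 1) = (if π.2 i then -1 else 1) * ((π.1 i : ℕ) + 1 : ℤ) := by
  have h : 0 < (i : ℕ) + 1 ∧ (i : ℕ) + 1 ≤ n := ⟨Nat.succ_pos _, i.2⟩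
  rw [vseq, dif_pos h]
  have hi : (⟨(i : ℕ) + 1 - 1, by omega⟩ : Fin n) = i := by ext; simp
  rw [hi]

lemma filter_Icc_card (n : ℕ) (P : ℕ → Prop) [DecidablePred P] :
    ((Finset.Icc 1 n).filter P).card = ∑ i : Fin n, (if P ((i : ℕ) + 1) then 1 else 0) := by
  have h : Finset.Icc 1 n = (Finset.range n).image (· + 1) := by
    ext k
    simp only [Finset.mem_Icc, Finset.mem_image, Finset.mem_range]
    constructor
    · rintro ⟨h1, h2⟩; exact ⟨k - 1, by omega, by omega⟩
    · rintro ⟨a, ha, rfl⟩; omega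
  rw [Finset.card_filter, h,
    Finset.sum_image (by intro a _ b _ hab; simp only at hab; omega),
    ← Fin.sum_univ_eq_sum_range (fun k => if P (k + 1) then 1 else 0)]

/-- For any signed permutation `π` of `[n]`, `fwex(π) + fexc(π^tr) = 2n`. -/
theorem fwex_add_fexc_transB (n : ℕ) (π : BPerm n) :
    fwex π + fexc (transB π) = 2 * n := by
  classical
  have hfw : fwex π = ∑ i : Fin n,
      (2 * (if ((i : ℕ) + 1 : ℤ) ≤ vseq π ((i : ℕ) + 1) then 1 else 0)
        + (if vseq π ((i : ℕ) + 1) < 0 then 1 else 0)) := by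
    rw [fwex, wex, neg, filter_Icc_card, filter_Icc_card, Finset.mul_sum,
      ← Finset.sum_add_distrib]
    push_cast
    rfl
  have hfe : fexc (transB π) = ∑ i : Fin n,
      (2 * (if ((π.1 i : ℕ) + 1 : ℤ) < vseq (transB π) ((π.1 i : ℕ) + 1) then 1 else 0)
        + (if vseq (transB π) ((π.1 i : ℕ) + 1) < 0 then 1 else 0)) := by
    rw [fexc, exc, neg, filter_Icc_card, filter_Icc_card, Finset.mul_sum,
      ← Finset.sum_add_distrib]
    push_cast
    exact (Equiv.sum_comp π.1 (fun j : Fin n =>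
      2 * (if ((j : ℕ) + 1 : ℤ) < vseq (transB π) ((j : ℕ) + 1) then 1 else 0)
        + (if vseq (transB π) ((j : ℕ) + 1) < 0 then 1 else 0))).symm
  rw [hfw, hfe, ← Finset.sum_add_distrib]
  have key : ∀ i : Fin n,
      (2 * (if ((i : ℕ) + 1 : ℤ) ≤ vseq π ((i : ℕ) + 1) then 1 else 0)
        + (if vseq π ((i : ℕ) + 1) < 0 then 1 else 0))
      + (2 * (if ((π.1 i : ℕ) + 1 : ℤ) < vseq (transB π) ((π.1 i : ℕ) + 1) then 1 else 0)
        + (if vseq (transB π) ((π.1 i : ℕ) + 1) < 0 then 1 else 0)) = 2 := by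
    intro i
    rw [vseq_succ, vseq_succ]
    have h1 : (transB π).1 (π.1 i) = i := by simp [transB]
    have h2 : (transB π).2 (π.1 i) = π.2 i := by simp [transB]
    rw [h1, h2]
    rcases Bool.eq_false_or_eq_true (π.2 i) with h | h <;>
      simp only [h, if_true, if_false, Bool.false_eq_true] <;>
      split_ifs <;> push_cast at * <;> omega
  rw [Finset.sum_congr rfl (fun i _ => key i), Finset.sum_const, Finset.card_univ,
    Fintype.card_fin, smul_eq_mul, Nat.mul_comm]

end BPerm
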